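/- Let G be a simple graph on a countable vertex set V with all vertex degrees bounded by a constant M, let D = {(i,k) : i and k adjacent in G} be the set of directed edges, and let f : V → ℝ be a bounded function. Define T_f : ℓ²(V, ℝ) → ℓ²(D, ℝ) by (T_f x)(i,k) = (f(k) − f(i))·x(k). Then T_f is a bounded operator and its operator norm equals sup_{i ∈ V} ( Σ_{j adjacent to i} (f(j) − f(i))² )^{1/2}. (T_f is the commutator [D, f] of the graph Dirac operator with the multiplication operator by f, so this computes ‖[D, f]‖.) -/

import Mathlib

/-- For a simple graph with uniformly bounded degrees and a bounded function `f` on the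
vertices, the commutator operator `T_f : ℓ²(V) → ℓ²(D)`, `(T_f x)(i,k) = (f k - f i) x k`
(with `D` the set of directed edges), is bounded with operator norm
`‖T_f‖ = sup_i (∑_{j ~ i} (f j - f i)²)^{1/2}`. -/
theorem stmt_8 {V : Type*} [Countable V] (G : SimpleGraph V)
    [∀ v, Fintype (G.neighborSet v)] (M : ℕ) (hM : ∀ v, G.degree v ≤ M)
    (f : V → ℝ) (hf : ∃ C, ∀ v, |f v| ≤ C)
    (T : lp (fun _ : V => ℝ) 2 →L[ℝ] lp (fun _ : {e : V × V // G.Adj e.1 e.2} => ℝ) 2)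
    (hT : ∀ (x : lp (fun _ : V => ℝ) 2) (e : {e : V × V // G.Adj e.1 e.2}),
      T x e = (f e.1.2 - f e.1.1) * x e.1.2) :
    ‖T‖ = ⨆ i : V, Real.sqrt (∑ j ∈ G.neighborFinset i, (f j - f i) ^ 2) := by
  classical
  set g : V → ℝ := fun k => ∑ j ∈ G.neighborFinset k, (f j - f k) ^ 2 with hg
  set S : V → ℝ := fun k => Real.sqrt (g k) with hS
  have hp2 : (0 : ℝ) < (2 : ENNReal).toReal := by norm_num
  have hrp : ∀ r : ℝ, r ^ (2 : ENNReal).toReal = r ^ (2 : ℕ) := by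
    intro r
    rw [show ((2 : ENNReal)).toReal = ((2 : ℕ) : ℝ) by norm_num, Real.rpow_natCast]
  have hgnonneg : ∀ k, 0 ≤ g k := fun k =>
    Finset.sum_nonneg fun j _ => sq_nonneg _
  -- the grouping equivalence
  let E : {e : V × V // G.Adj e.1 e.2} ≃ Σ k : V, (G.neighborSet k) :=
    { toFun := fun e => ⟨e.1.2, ⟨e.1.1, e.2.symm⟩⟩
      invFun := fun p => ⟨(↑p.2, p.1), p.2.2.symm⟩
      left_inv := fun e => rfl
      right_inv := fun p => rfl }
  -- key identities for an arbitrary x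
  have key : ∀ x : lp (fun _ : V => ℝ) 2,
      (Summable fun k => g k * (x k) ^ 2) ∧ ‖T x‖ ^ 2 = ∑' k : V, g k * (x k) ^ 2 := by
    intro x
    have hsum0 : Summable fun e : {e : V × V // G.Adj e.1 e.2} =>
        ‖T x e‖ ^ (2 : ENNReal).toReal := (lp.memℓp (T x)).summable hp2
    have hfe : ∀ e : {e : V × V // G.Adj e.1 e.2},
        ‖T x e‖ ^ (2 : ENNReal).toReal = (f e.1.2 - f e.1.1) ^ 2 * (x e.1.2) ^ 2 := by
      intro e
      rw [hrp, hT, Real.norm_eq_abs, sq_abs, mul_pow]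
    have hsum1 : Summable fun e : {e : V × V // G.Adj e.1 e.2} =>
        (f e.1.2 - f e.1.1) ^ 2 * (x e.1.2) ^ 2 := by
      refine hsum0.congr fun e => ?_
      rw [hfe]
    -- transfer along the equivalence
    have hsum2 : Summable fun p : Σ k : V, (G.neighborSet k) =>
        (f p.1 - f (↑p.2 : V)) ^ 2 * (x p.1) ^ 2 := by
      have := (Equiv.summable_iff E.symm
        (f := fun e : {e : V × V // G.Adj e.1 e.2} =>
          (f e.1.2 - f e.1.1) ^ 2 * (x e.1.2) ^ 2)).2 hsum1
      exact this
    have hfiber : ∀ k : V,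
        (∑' j : (G.neighborSet k), (f k - f (↑j : V)) ^ 2 * (x k) ^ 2) = g k * (x k) ^ 2 := by
      intro k
      rw [tsum_fintype]
      rw [Finset.sum_set_coe (f := fun j => (f k - f j) ^ 2 * (x k) ^ 2) (G.neighborSet k),
        ← SimpleGraph.neighborFinset_def, hg, Finset.sum_mul]
      refine Finset.sum_congr rfl fun j _ => by ring
    have hsum3 : Summable fun k : V => g k * (x k) ^ 2 := by
      have := hsum2.sigma
      refine this.congr fun k => ?_
      exact hfiber k
    refine ⟨hsum3, ?_⟩
    have h1 : ‖T x‖ ^ (2 : ENNReal).toReal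
        = ∑' e : {e : V × V // G.Adj e.1 e.2}, ‖T x e‖ ^ (2 : ENNReal).toReal :=
      lp.norm_rpow_eq_tsum hp2 (T x)
    rw [hrp] at h1
    have h4 : (∑' e : {e : V × V // G.Adj e.1 e.2}, (f e.1.2 - f e.1.1) ^ 2 * (x e.1.2) ^ 2)
        = ∑' p : Σ k : V, (G.neighborSet k), (f p.1 - f (↑p.2 : V)) ^ 2 * (x p.1) ^ 2 := by
      rw [← Equiv.tsum_eq E.symm
        (fun e : {e : V × V // G.Adj e.1 e.2} => (f e.1.2 - f e.1.1) ^ 2 * (x e.1.2) ^ 2)]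
      exact tsum_congr fun p => rfl
    rw [h1, tsum_congr hfe, h4, Summable.tsum_sigma hsum2]
    exact tsum_congr hfiber
  have hx2 : ∀ x : lp (fun _ : V => ℝ) 2,
      (Summable fun k => (x k) ^ 2) ∧ ‖x‖ ^ 2 = ∑' k : V, (x k) ^ 2 := by
    intro x
    have hsum0 : Summable fun k : V => ‖x k‖ ^ (2 : ENNReal).toReal := (lp.memℓp x).summable hp2
    have hfe : ∀ k : V, ‖x k‖ ^ (2 : ENNReal).toReal = (x k) ^ 2 := by
      intro k
      rw [hrp, Real.norm_eq_abs, sq_abs]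
    have h1 : ‖x‖ ^ (2 : ENNReal).toReal = ∑' k : V, ‖x k‖ ^ (2 : ENNReal).toReal :=
      lp.norm_rpow_eq_tsum hp2 x
    rw [hrp] at h1
    exact ⟨hsum0.congr hfe, by rw [h1]; exact tsum_congr hfe⟩
  -- lower bound : S k ≤ ‖T‖ for each k
  have hlow : ∀ k : V, S k ≤ ‖T‖ := by
    intro k
    set x : lp (fun _ : V => ℝ) 2 := lp.single 2 k (1 : ℝ) with hx
    have hxnorm : ‖x‖ = 1 := by
      have := lp.norm_single (E := fun _ : V => ℝ) (by norm_num : (0 : ENNReal) < 2) k (1 : ℝ)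
      exact this.trans norm_one
    have hTx : ‖T x‖ ^ 2 = g k := by
      rw [(key x).2]
      rw [tsum_eq_single k]
      · have h : x k = 1 := by rw [hx]; exact lp.single_apply_self (E := fun _ : V => ℝ) 2 k (1 : ℝ)
        rw [h]; ring
      · intro b hb
        have h : x b = 0 := by rw [hx]; exact lp.single_apply_ne (E := fun _ : V => ℝ) 2 k (1 : ℝ) hb
        rw [h]; ring
    have : S k = ‖T x‖ := by
      rw [hS]
      simp only []
      rw [← hTx, Real.sqrt_sq (norm_nonneg _)]
    rw [this]
    calc ‖T x‖ ≤ ‖T‖ * ‖x‖ := T.le_opNorm x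
    _ = ‖T‖ := by rw [hxnorm, mul_one]
  rcases isEmpty_or_nonempty V with hV | hV
  · -- empty case: both sides are zero
    have hT0 : T = 0 := by
      ext x e
      exact absurd (Nonempty.intro e.1.1) (not_nonempty_iff.2 hV)
    rw [hT0, norm_zero, Real.iSup_of_isEmpty]
  · have hbdd : BddAbove (Set.range S) := by
      refine ⟨‖T‖, ?_⟩
      rintro _ ⟨k, rfl⟩
      exact hlow k
    have hCnonneg : 0 ≤ ⨆ i, S i := by
      obtain ⟨k⟩ := hV
      exact le_trans (Real.sqrt_nonneg (g k)) (le_ciSup hbdd k)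
    refine le_antisymm ?_ (ciSup_le hlow)
    refine T.opNorm_le_bound hCnonneg fun x => ?_
    set C := ⨆ i, S i with hC
    have hgle : ∀ k, g k ≤ C ^ 2 := by
      intro k
      have h1 : S k ≤ C := le_ciSup hbdd k
      have h2 : S k ^ 2 ≤ C ^ 2 := by
        apply pow_le_pow_left₀ (Real.sqrt_nonneg _) h1
      rwa [hS, Real.sq_sqrt (hgnonneg k)] at h2
    have hsq : ‖T x‖ ^ 2 ≤ (C * ‖x‖) ^ 2 := by
      rw [(key x).2, mul_pow]
      have hle : ∑' k : V, g k * (x k) ^ 2 ≤ ∑' k : V, C ^ 2 * (x k) ^ 2 := by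
        refine Summable.tsum_le_tsum (fun k => ?_) (key x).1 ((hx2 x).1.mul_left _)
        exact mul_le_mul_of_nonneg_right (hgle k) (sq_nonneg _)
      calc ∑' k : V, g k * (x k) ^ 2 ≤ ∑' k : V, C ^ 2 * (x k) ^ 2 := hle
      _ = C ^ 2 * ∑' k : V, (x k) ^ 2 := by rw [tsum_mul_left]
      _ = C ^ 2 * ‖x‖ ^ 2 := by rw [(hx2 x).2]
    exact (pow_le_pow_iff_left₀ (norm_nonneg _)
      (mul_nonneg hCnonneg (norm_nonneg _)) two_ne_zero).1 hsq
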